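/- arXiv:2002.04491 — 2 statements merged into one kernel-verified Lean document; each statement's English description precedes it below -/
import Mathlib

section
/- If I_{N+1} = ⟨π^{N+1}·ν(Q_{≤N+1}), Q_{>N+1}⟩ holds in K{X}°, then dividing by π^{N+1} and reducing modulo π yields Ī_{N+1} = ⟨ρ(Q_{≤N+1})⟩ as an ideal of k[X]. -/
open MvPowerSeries

namespace TateStmt

variable {n : ℕ} {O : Type*} [CommRing O]

/-- The Tate condition: the (π-adic) valuations of the coefficients tend to infinity. -/
def IsTate (π : O) (f : MvPowerSeries (Fin n) O) : Prop :=
  ∀ N : ℕ, {i : Fin n →₀ ℕ | ¬ π ^ N ∣ MvPowerSeries.coeff i f}.Finite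

/-- The integral Tate algebra `K{X}°`, as a subring of the ring of formal power series
over the valuation ring `O = K°`. -/
def TateAlgebra (n : ℕ) (O : Type*) [CommRing O] (π : O) :
    Subring (MvPowerSeries (Fin n) O) where
  carrier := {f | IsTate π f}
  zero_mem' := by
    intro N
    apply Set.Finite.subset (Set.finite_empty)
    intro i hi
    exact hi (Dvd.intro 0 (by simp))
  one_mem' := by
    intro N
    apply Set.Finite.subset (Set.finite_singleton (0 : Fin n →₀ ℕ))
    intro i hi
    by_contra h
    rw [Set.mem_singleton_iff] at h
    apply hi
    rw [MvPowerSeries.coeff_one, if_neg h]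
    exact Dvd.intro 0 (by simp)
  add_mem' := by
    intro f g hf hg N
    apply Set.Finite.subset ((hf N).union (hg N))
    intro i hi
    by_contra h
    simp only [Set.mem_union, Set.mem_setOf_eq, not_or, not_not] at h
    exact hi (by rw [map_add]; exact dvd_add h.1 h.2)
  neg_mem' := by
    intro f hf N
    apply Set.Finite.subset (hf N)
    intro i hi
    by_contra h
    simp only [Set.mem_setOf_eq, not_not] at h
    exact hi (by rw [map_neg]; exact (dvd_neg).mpr h)
  mul_mem' := by
    intro f g hf hg N
    apply Set.Finite.subset (Set.Finite.add (hf N) (hg N))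
    intro i hi
    by_contra h
    apply hi
    rw [MvPowerSeries.coeff_mul]
    apply Finset.dvd_sum
    intro p hp
    rw [Finset.HasAntidiagonal.mem_antidiagonal] at hp
    by_cases h1 : π ^ N ∣ MvPowerSeries.coeff p.1 f
    · exact Dvd.dvd.mul_right h1 _
    · by_cases h2 : π ^ N ∣ MvPowerSeries.coeff p.2 g
      · exact Dvd.dvd.mul_left h2 _
      · exact absurd (hp ▸ Set.add_mem_add h1 h2) h

/-- Tate monomials `π^a X^i`, identified with pairs `(a, i) ∈ ℕ × ℕ^n`. -/
abbrev TMon (n : ℕ) := ℕ × (Fin n →₀ ℕ)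

noncomputable def monMul (a b : TMon n) : TMon n := (a.1 + b.1, a.2 + b.2)
def monDvd (a b : TMon n) : Prop := a.1 ≤ b.1 ∧ a.2 ≤ b.2
noncomputable def monDiv (a b : TMon n) : TMon n := (a.1 - b.1, a.2 - b.2)
noncomputable def monLcm (a b : TMon n) : TMon n := (max a.1 b.1, a.2 ⊔ b.2)

/-- The valuation-first term order: compare valuations first (a *smaller* valuation gives a
*larger* term), then exponents via the monomial order `mo`. -/
def termLT (mo : MonomialOrder (Fin n)) (a b : TMon n) : Prop :=
  b.1 < a.1 ∨ (a.1 = b.1 ∧ mo.toSyn a.2 < mo.toSyn b.2)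

def termLE (mo : MonomialOrder (Fin n)) (a b : TMon n) : Prop :=
  a = b ∨ termLT mo a b

/-- Order on `Option (TMon n)`, where `none` (the "monomial" of `0`) is smallest. -/
def optLT (mo : MonomialOrder (Fin n)) : Option (TMon n) → Option (TMon n) → Prop
  | none, none => False
  | none, some _ => True
  | some _, none => False
  | some a, some b => termLT mo a b

def optLE (mo : MonomialOrder (Fin n)) (a b : Option (TMon n)) : Prop :=
  a = b ∨ optLT mo a b

noncomputable def optMul (t : TMon n) : Option (TMon n) → Option (TMon n)
  | none => none
  | some a => some (monMul t a)

/-- `(a, i)` is (the monomial of) a term of `f`: the coefficient of `X^i` has valuation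
exactly `a`. -/
def IsTerm (π : O) (f : MvPowerSeries (Fin n) O) (m : TMon n) : Prop :=
  π ^ m.1 ∣ MvPowerSeries.coeff m.2 f ∧ ¬ π ^ (m.1 + 1) ∣ MvPowerSeries.coeff m.2 f

/-- `m` is the leading monomial of `f`. -/
def IsLM (π : O) (mo : MonomialOrder (Fin n)) (f : MvPowerSeries (Fin n) O) (m : TMon n) :
    Prop :=
  IsTerm π f m ∧ ∀ m', IsTerm π f m' → termLE mo m' m

/-- `s` is the leading monomial of `f`, with the convention `LM 0 = none`. -/
def IsLMopt (π : O) (mo : MonomialOrder (Fin n)) (f : MvPowerSeries (Fin n) O) :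
    Option (TMon n) → Prop
  | none => f = 0
  | some m => IsLM π mo f m

/-- All coefficients of `f` are divisible by `π^N`, i.e. `val f ≥ N`. -/
def DvdAll (π : O) (N : ℕ) (f : MvPowerSeries (Fin n) O) : Prop :=
  ∀ i, π ^ N ∣ MvPowerSeries.coeff i f

/-- The Gauss valuation of `f` is exactly `N`. -/
def ValEq (π : O) (f : MvPowerSeries (Fin n) O) (N : ℕ) : Prop :=
  DvdAll π N f ∧ ¬ DvdAll π (N + 1) f

/-- `G` is a Gröbner basis of the ideal `I` of the (integral) Tate algebra. -/
def IsGB (π : O) (mo : MonomialOrder (Fin n)) (G : Set (TateAlgebra n O π))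
    (I : Ideal (TateAlgebra n O π)) : Prop :=
  (∀ g ∈ G, g ∈ I) ∧
    ∀ f ∈ I, (f : MvPowerSeries (Fin n) O) ≠ 0 → ∀ mf,
      IsLM π mo (f : MvPowerSeries (Fin n) O) mf →
        ∃ g ∈ G, ∃ mg, IsLM π mo (g : MvPowerSeries (Fin n) O) mg ∧ monDvd mg mf

/-- The module `M = {(u,v) : u f - v ∈ I₀}`. -/
def SigMod {π : O} (I0 : Ideal (TateAlgebra n O π)) (f : TateAlgebra n O π) :
    Set (TateAlgebra n O π × TateAlgebra n O π) :=
  {p | p.1 * f - p.2 ∈ I0}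

/-- `p = (u₁,v₁)` is top-reducible by `q = (u₂,v₂)`. -/
def TopRed (π : O) (mo : MonomialOrder (Fin n))
    (p q : TateAlgebra n O π × TateAlgebra n O π) : Prop :=
  (q.2 = 0 ∧ ∃ mu mq, IsLM π mo (p.1 : MvPowerSeries (Fin n) O) mu ∧
      IsLM π mo (q.1 : MvPowerSeries (Fin n) O) mq ∧ monDvd mq mu)
  ∨ (p.2 ≠ 0 ∧ q.2 ≠ 0 ∧
      ∃ m1 m2, IsLM π mo (p.2 : MvPowerSeries (Fin n) O) m1 ∧
        IsLM π mo (q.2 : MvPowerSeries (Fin n) O) m2 ∧ monDvd m2 m1 ∧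
        ∃ s1 s2, IsLMopt π mo (p.1 : MvPowerSeries (Fin n) O) s1 ∧
          IsLMopt π mo (q.1 : MvPowerSeries (Fin n) O) s2 ∧
          optLE mo (optMul (monDiv m1 m2) s2) s1)

/-- `G` is a strong Gröbner basis of the module `M = SigMod I0 f`. -/
def IsSGB (π : O) (mo : MonomialOrder (Fin n)) (I0 : Ideal (TateAlgebra n O π))
    (f : TateAlgebra n O π) (G : Set (TateAlgebra n O π × TateAlgebra n O π)) : Prop :=
  G.Finite ∧ G ⊆ SigMod I0 f ∧
    ∀ p ∈ SigMod I0 f, p ≠ 0 → ∃ q ∈ G, TopRed π mo p q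

/-- `p` is covered by `q`. -/
def Covers (π : O) (mo : MonomialOrder (Fin n))
    (q p : TateAlgebra n O π × TateAlgebra n O π) : Prop :=
  ∃ mu mq, IsLM π mo (p.1 : MvPowerSeries (Fin n) O) mu ∧
    IsLM π mo (q.1 : MvPowerSeries (Fin n) O) mq ∧ monDvd mq mu ∧
    ∃ sv sp, IsLMopt π mo (q.2 : MvPowerSeries (Fin n) O) sv ∧
      IsLMopt π mo (p.2 : MvPowerSeries (Fin n) O) sp ∧
      optLT mo (optMul (monDiv mu mq) sv) sp

def CoveredBy (π : O) (mo : MonomialOrder (Fin n))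
    (p : TateAlgebra n O π × TateAlgebra n O π)
    (G : Set (TateAlgebra n O π × TateAlgebra n O π)) : Prop :=
  ∃ q ∈ G, Covers π mo q p

/-- The Tate series `π^a X^i`, as an element of the Tate algebra. -/
noncomputable def monTA (π : O) (m : TMon n) : TateAlgebra n O π :=
  ⟨MvPowerSeries.monomial m.2 (π ^ m.1), by
    intro N
    apply Set.Finite.subset (Set.finite_singleton m.2)
    intro i hi
    by_contra h
    rw [Set.mem_singleton_iff] at h
    apply hi
    rw [MvPowerSeries.coeff_monomial, if_neg h]
    exact Dvd.intro 0 (by simp)⟩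

noncomputable def smulPair (π : O) (m : TMon n) (p : TateAlgebra n O π × TateAlgebra n O π) :
    TateAlgebra n O π × TateAlgebra n O π :=
  (monTA π m * p.1, monTA π m * p.2)

/-- `r` is the J-pair of `(p, q)` (with `p` carrying the larger signature part). -/
def IsJPair (π : O) (mo : MonomialOrder (Fin n))
    (p q r : TateAlgebra n O π × TateAlgebra n O π) : Prop :=
  ∃ m1 m2, IsLM π mo (p.2 : MvPowerSeries (Fin n) O) m1 ∧
    IsLM π mo (q.2 : MvPowerSeries (Fin n) O) m2 ∧
    (∃ s1 s2, IsLMopt π mo (p.1 : MvPowerSeries (Fin n) O) s1 ∧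
      IsLMopt π mo (q.1 : MvPowerSeries (Fin n) O) s2 ∧
      optLT mo (optMul (monDiv (monLcm m1 m2) m2) s2)
        (optMul (monDiv (monLcm m1 m2) m1) s1)) ∧
    r = smulPair π (monDiv (monLcm m1 m2) m1) p

section Residue

variable {k : Type*} [Field k]

/-- `P = ρ(f)`, the reduction mod `π` of `π^{-val f} f`. -/
def IsRho (π : O) (φ : O →+* k) (f : MvPowerSeries (Fin n) O)
    (P : MvPolynomial (Fin n) k) : Prop :=
  ∃ (N : ℕ) (g : MvPowerSeries (Fin n) O), f = (π ^ N) • g ∧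
    (∃ i, ¬ π ∣ MvPowerSeries.coeff i g) ∧
    ∀ i, MvPolynomial.coeff i P = φ (MvPowerSeries.coeff i g)

def rhoSet (π : O) (φ : O →+* k) (S : Set (TateAlgebra n O π)) :
    Set (MvPolynomial (Fin n) k) :=
  {P | ∃ f ∈ S, IsRho π φ (f : MvPowerSeries (Fin n) O) P}

/-- `Ī_N`: the image in `k[X]` of `π^{-N} (I ∩ π^N K{X}°)`. -/
def BarIdeal (π : O) (φ : O →+* k) (I : Ideal (TateAlgebra n O π)) (N : ℕ) :
    Set (MvPolynomial (Fin n) k) :=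
  {P | ∃ f ∈ I, ∃ g : MvPowerSeries (Fin n) O, (f : MvPowerSeries (Fin n) O) = (π ^ N) • g ∧
    ∀ i, MvPolynomial.coeff i P = φ (MvPowerSeries.coeff i g)}

/-- `d` is the leading exponent of the polynomial `P` for the monomial order `mo`. -/
def IsPolyLM (mo : MonomialOrder (Fin n)) (P : MvPolynomial (Fin n) k)
    (d : Fin n →₀ ℕ) : Prop :=
  MvPolynomial.coeff d P ≠ 0 ∧ ∀ e, MvPolynomial.coeff e P ≠ 0 → mo.toSyn e ≤ mo.toSyn d

/-- `G` is a Gröbner basis of the set (ideal) `J` of polynomials over the residue field. -/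
def IsPolyGB (mo : MonomialOrder (Fin n)) (G : Set (MvPolynomial (Fin n) k))
    (J : Set (MvPolynomial (Fin n) k)) : Prop :=
  G ⊆ J ∧ ∀ P ∈ J, P ≠ 0 → ∀ d, IsPolyLM mo P d →
    ∃ Q ∈ G, ∃ e, IsPolyLM mo Q e ∧ e ≤ d

end Residue

end TateStmt


open TateStmt MvPowerSeries

variable {n : ℕ} {O k : Type*} [CommRing O] [IsDomain O] [IsDiscreteValuationRing O] [Field k]

/-- `Q_{≤N}`: the elements of `Q_all` of valuation at most `N`. -/
def Qle (π : O) (Qall : Set (TateAlgebra n O π)) (N : ℕ) : Set (TateAlgebra n O π) :=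
  {f ∈ Qall | ∃ M ≤ N, ValEq π (f : MvPowerSeries (Fin n) O) M}

/-- `Q_{>N}`: the elements of `Q_all` of valuation greater than `N`. -/
def Qgt (π : O) (Qall : Set (TateAlgebra n O π)) (N : ℕ) : Set (TateAlgebra n O π) :=
  {f ∈ Qall | ¬ ∃ M ≤ N, ValEq π (f : MvPowerSeries (Fin n) O) M}

/-- The set `π^a · S` for `S` a set of Tate series. -/
noncomputable def piPowMulSet (π : O) (a : ℕ) (S : Set (TateAlgebra n O π)) :
    Set (TateAlgebra n O π) :=
  (fun g => monTA π (a, 0) * g) '' S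

/-- The set `π^{-N} · S` (those `g` with `π^N g ∈ S`). -/
def piPowDivSet (π : O) (N : ℕ) (S : Set (TateAlgebra n O π)) :
    Set (TateAlgebra n O π) :=
  {g | ∃ f ∈ S, (f : MvPowerSeries (Fin n) O) =
    (π ^ N) • (g : MvPowerSeries (Fin n) O)}


section Aux17

open TateStmt

variable {n : ℕ} {O k : Type*} [CommRing O] [IsDomain O] [IsDiscreteValuationRing O] [Field k]

/-- Cancel `π ^ a •` on multivariate power series over a domain. -/
lemma aux_smul_cancel {π : O} (hπ : π ≠ 0) (a : ℕ) {x y : MvPowerSeries (Fin n) O}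
    (h : (π ^ a) • x = (π ^ a) • y) : x = y := by
  ext i
  have h2 := congrArg (MvPowerSeries.coeff i) h
  simp only [map_smul, smul_eq_mul] at h2
  exact mul_left_cancel₀ (pow_ne_zero a hπ) h2

/-- The reduction of a Tate series modulo `π`, as a polynomial over the residue field. -/
noncomputable def redPoly (π : O) (φ : O →+* k) (hker : RingHom.ker φ = Ideal.span {π})
    (g : TateAlgebra n O π) : MvPolynomial (Fin n) k :=
  AddMonoidAlgebra.ofCoeff <| Finsupp.onFinset (g.2 1).toFinset
    (fun i => φ (MvPowerSeries.coeff i (g : MvPowerSeries (Fin n) O)))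
    (fun i h => by
      rw [Set.Finite.mem_toFinset]
      intro hdvd
      rw [pow_one] at hdvd
      exact h (by
        have hmem : (MvPowerSeries.coeff i (g : MvPowerSeries (Fin n) O)) ∈ RingHom.ker φ := by
          rw [hker]; exact Ideal.mem_span_singleton.mpr hdvd
        exact hmem))

lemma redPoly_coeff (π : O) (φ : O →+* k) (hker : RingHom.ker φ = Ideal.span {π})
    (g : TateAlgebra n O π) (i : Fin n →₀ ℕ) :
    MvPolynomial.coeff i (redPoly π φ hker g) =
      φ (MvPowerSeries.coeff i (g : MvPowerSeries (Fin n) O)) := rfl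

lemma map_eq_coe_iff (φ : O →+* k) (g : MvPowerSeries (Fin n) O)
    (P : MvPolynomial (Fin n) k) :
    MvPowerSeries.map (σ := Fin n) φ g = (P : MvPowerSeries (Fin n) k) ↔
      ∀ i, MvPolynomial.coeff i P = φ (MvPowerSeries.coeff i g) := by
  constructor
  · intro h i
    have := congrArg (MvPowerSeries.coeff i) h
    rw [MvPowerSeries.coeff_map, MvPolynomial.coeff_coe] at this
    exact this.symm
  · intro h
    ext i
    rw [MvPowerSeries.coeff_map, MvPolynomial.coeff_coe, h i]

lemma redPoly_spec (π : O) (φ : O →+* k) (hker : RingHom.ker φ = Ideal.span {π})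
    (g : TateAlgebra n O π) :
    MvPowerSeries.map (σ := Fin n) φ (g : MvPowerSeries (Fin n) O) =
      ((redPoly π φ hker g : MvPolynomial (Fin n) k) : MvPowerSeries (Fin n) k) := by
  rw [map_eq_coe_iff]
  intro i
  rfl

/-- A lift of a polynomial over `k` to a Tate series over `O`. -/
noncomputable def liftTate (π : O) (φ : O →+* k) (hsurj : Function.Surjective φ)
    (c : MvPolynomial (Fin n) k) : TateAlgebra n O π :=
  ⟨(fun i => if i ∈ c.support then Classical.choose (hsurj (MvPolynomial.coeff i c)) else 0 :
      (Fin n →₀ ℕ) → O), by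
    intro M
    apply Set.Finite.subset c.support.finite_toSet
    intro i hi
    by_contra h
    apply hi
    show (π : O) ^ M ∣ MvPowerSeries.coeff i _
    show (π:O) ^ M ∣ (if i ∈ c.support then Classical.choose (hsurj (MvPolynomial.coeff i c)) else 0)
    rw [if_neg (fun hh => h (Finset.mem_coe.mpr hh))]
    exact dvd_zero _⟩

lemma liftTate_spec (π : O) (φ : O →+* k) (hsurj : Function.Surjective φ)
    (c : MvPolynomial (Fin n) k) :
    MvPowerSeries.map (σ := Fin n) φ ((liftTate π φ hsurj c : TateAlgebra n O π) :
        MvPowerSeries (Fin n) O) = (c : MvPowerSeries (Fin n) k) := by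
  rw [map_eq_coe_iff]
  intro i
  have hco : MvPowerSeries.coeff i ((liftTate π φ hsurj c : TateAlgebra n O π) :
      MvPowerSeries (Fin n) O) =
      (if i ∈ c.support then Classical.choose (hsurj (MvPolynomial.coeff i c)) else 0) := rfl
  rw [hco]
  by_cases h : i ∈ c.support
  · rw [if_pos h]
    exact (Classical.choose_spec (hsurj (MvPolynomial.coeff i c))).symm
  · rw [if_neg h, map_zero]
    exact MvPolynomial.notMem_support_iff.mp h

lemma valEq_unique {π : O} {f : MvPowerSeries (Fin n) O} {a b : ℕ}
    (ha : ValEq π f a) (hb : ValEq π f b) : a = b := by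
  by_contra hne
  rcases Nat.lt_or_ge a b with h | h
  · exact ha.2 (fun i => dvd_trans (pow_dvd_pow π h) (hb.1 i))
  · have h' : b < a := lt_of_le_of_ne h (Ne.symm hne)
    exact hb.2 (fun i => dvd_trans (pow_dvd_pow π h') (ha.1 i))

lemma monTA_mul_coe (π : O) (a : ℕ) (x : TateAlgebra n O π) :
    ((monTA π (a, 0) * x : TateAlgebra n O π) : MvPowerSeries (Fin n) O) =
      (π ^ a) • (x : MvPowerSeries (Fin n) O) := by
  have : ((monTA π (a, 0) * x : TateAlgebra n O π) : MvPowerSeries (Fin n) O) =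
      ((monTA π (a, 0) : TateAlgebra n O π) : MvPowerSeries (Fin n) O) *
        (x : MvPowerSeries (Fin n) O) := rfl
  rw [this]
  show (MvPowerSeries.monomial (0 : Fin n →₀ ℕ) (π ^ a)) * _ = _
  rw [MvPowerSeries.monomial_zero_eq_C_apply, ← MvPowerSeries.smul_eq_C_mul]

lemma qgt_dvdAll {π : O} {Qall : Set (TateAlgebra n O π)} {N : ℕ}
    {s : TateAlgebra n O π} (hs : s ∈ Qgt π Qall N) :
    DvdAll π (N + 1) (s : MvPowerSeries (Fin n) O) := by
  by_contra h
  apply hs.2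
  classical
  have hex : ∃ M, ¬ DvdAll π (M + 1) (s : MvPowerSeries (Fin n) O) := ⟨N, h⟩
  refine ⟨Nat.find hex, Nat.find_le h, ?_, Nat.find_spec hex⟩
  intro i
  rcases Nat.eq_zero_or_pos (Nat.find hex) with h0 | hpos
  · rw [h0, pow_zero]; exact one_dvd _
  · have hm := Nat.find_min hex (Nat.sub_lt hpos one_pos)
    rw [not_not] at hm
    have heq : Nat.find hex - 1 + 1 = Nat.find hex := by omega
    rw [heq] at hm
    exact hm i

end Aux17

/-- (c) at level `N` implies (d) at level `N+1`: if
`I_{N+1} = ⟨π^{N+1} ν(Q_{≤N+1}), Q_{>N+1}⟩` in `K{X}°`, then dividing by `π^{N+1}` and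
reducing modulo `π` yields `Ī_{N+1} = ⟨ρ(Q_{≤N+1})⟩` as an ideal of `k[X]`. -/
theorem statement_17 (π : O) (hπ : Irreducible π) (φ : O →+* k)
    (hsurj : Function.Surjective φ) (hker : RingHom.ker φ = Ideal.span {π})
    (I : Ideal (TateAlgebra n O π)) (Qall : Set (TateAlgebra n O π))
    (hQI : ∀ f ∈ Qall, f ∈ I)
    (nu : TateAlgebra n O π → TateAlgebra n O π)
    (hnu : ∀ f ∈ Qall, f ≠ 0 → ∃ N : ℕ, ValEq π (f : MvPowerSeries (Fin n) O) N ∧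
      (f : MvPowerSeries (Fin n) O) = (π ^ N) • ((nu f : TateAlgebra n O π) :
        MvPowerSeries (Fin n) O))
    (N : ℕ)
    (hc : {h : TateAlgebra n O π | h ∈ I ∧ DvdAll π (N + 1) (h : MvPowerSeries (Fin n) O)} =
      ((Ideal.span (piPowMulSet π (N + 1) (nu '' Qle π Qall (N + 1)) ∪ Qgt π Qall (N + 1)) :
        Ideal (TateAlgebra n O π)) : Set (TateAlgebra n O π))) :
    BarIdeal π φ I (N + 1) =
      ((Ideal.span (rhoSet π φ (Qle π Qall (N + 1))) :
        Ideal (MvPolynomial (Fin n) k)) : Set (MvPolynomial (Fin n) k)) := by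
  classical
  have hπ0 : π ≠ 0 := hπ.ne_zero
  ext P
  simp only [SetLike.mem_coe]
  constructor
  · rintro ⟨f, hfI, g, hfg, hPg⟩
    have hdvd : DvdAll π (N + 1) (f : MvPowerSeries (Fin n) O) := by
      intro i
      rw [hfg, map_smul, smul_eq_mul]
      exact Dvd.intro _ rfl
    have hfmem : f ∈ Ideal.span (piPowMulSet π (N + 1) (nu '' Qle π Qall (N + 1)) ∪
        Qgt π Qall (N + 1)) := by
      have hmem : f ∈ {h : TateAlgebra n O π | h ∈ I ∧
          DvdAll π (N + 1) (h : MvPowerSeries (Fin n) O)} := ⟨hfI, hdvd⟩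
      rw [hc] at hmem
      exact hmem
    obtain ⟨c, hcs, hcf⟩ := Submodule.mem_span_set.mp hfmem
    have claim : ∀ s : TateAlgebra n O π, ∃ (gs : MvPowerSeries (Fin n) O)
        (Qs : MvPolynomial (Fin n) k), s ∈ c.support →
        ((s : MvPowerSeries (Fin n) O) = (π ^ (N + 1)) • gs ∧
          MvPowerSeries.map (σ := Fin n) φ gs = (Qs : MvPowerSeries (Fin n) k) ∧
          (Qs = 0 ∨ Qs ∈ rhoSet π φ (Qle π Qall (N + 1)))) := by
      intro s
      by_cases hsmem : s ∈ c.support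
      swap
      · exact ⟨0, 0, fun h => absurd h hsmem⟩
      rcases hcs hsmem with hsA | hsB
      · obtain ⟨g', ⟨q, hqle, rfl⟩, rfl⟩ := hsA
        refine ⟨((nu q : TateAlgebra n O π) : MvPowerSeries (Fin n) O),
          redPoly π φ hker (nu q), fun _ =>
          ⟨monTA_mul_coe π (N + 1) (nu q), redPoly_spec π φ hker (nu q), Or.inr ?_⟩⟩
        obtain ⟨hqQ, M, hMle, hval⟩ := hqle
        have hq0 : q ≠ 0 := by
          intro h0
          apply hval.2
          intro i
          rw [h0]
          simp
        obtain ⟨M', hval', heq⟩ := hnu q hqQ hq0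
        refine ⟨q, ⟨hqQ, M, hMle, hval⟩, M',
          ((nu q : TateAlgebra n O π) : MvPowerSeries (Fin n) O), heq, ?_, fun i => rfl⟩
        obtain ⟨i, hi⟩ := not_forall.mp hval'.2
        refine ⟨i, fun hdvd' => hi ?_⟩
        rw [heq, map_smul, smul_eq_mul, pow_succ]
        exact mul_dvd_mul_left _ hdvd'
      · have hdA : DvdAll π (N + 1 + 1) (s : MvPowerSeries (Fin n) O) := qgt_dvdAll hsB
        choose t ht using hdA
        refine ⟨(fun i => π * t i : (Fin n →₀ ℕ) → O), 0, fun _ => ⟨?_, ?_, Or.inl rfl⟩⟩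
        · ext i
          erw [map_smul, smul_eq_mul]
          have hcoe : MvPowerSeries.coeff i
              ((fun i => π * t i : (Fin n →₀ ℕ) → O) : MvPowerSeries (Fin n) O) = π * t i := rfl
          rw [hcoe, ht i]
          ring
        · ext i
          erw [MvPowerSeries.coeff_map]
          have hcoe : MvPowerSeries.coeff i
              ((fun i => π * t i : (Fin n →₀ ℕ) → O) : MvPowerSeries (Fin n) O) = π * t i := rfl
          rw [hcoe, map_mul]
          have hπ0' : φ π = 0 := by
            have : π ∈ RingHom.ker φ := by
              rw [hker]
              exact Ideal.mem_span_singleton.mpr dvd_rfl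
            exact this
          rw [hπ0', zero_mul]
          simp [MvPolynomial.coeff_coe]
      -- end claim
    choose gs Qs hgsQ using claim
    have hgsum : g = ∑ s ∈ c.support,
        ((c s : TateAlgebra n O π) : MvPowerSeries (Fin n) O) * gs s := by
      apply aux_smul_cancel hπ0 (N + 1)
      rw [← hfg]
      have h1 : (f : MvPowerSeries (Fin n) O) = ∑ s ∈ c.support,
          ((c s : TateAlgebra n O π) : MvPowerSeries (Fin n) O) *
            (s : MvPowerSeries (Fin n) O) := by
        rw [← hcf, Finsupp.sum]
        simp only [smul_eq_mul, AddSubmonoidClass.coe_finset_sum, MulMemClass.coe_mul]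
      rw [h1, Finset.smul_sum]
      refine Finset.sum_congr rfl fun s hs => ?_
      rw [(hgsQ s hs).1, mul_smul_comm]
    have hPsum : P = ∑ s ∈ c.support, redPoly π φ hker (c s) * Qs s := by
      rw [← MvPolynomial.coe_inj]
      have h1 : (P : MvPowerSeries (Fin n) k) =
          MvPowerSeries.map (σ := Fin n) φ g := ((map_eq_coe_iff φ g P).mpr hPg).symm
      have h2 : ((∑ s ∈ c.support, redPoly π φ hker (c s) * Qs s :
          MvPolynomial (Fin n) k) : MvPowerSeries (Fin n) k) =
          ∑ s ∈ c.support, (redPoly π φ hker (c s) : MvPowerSeries (Fin n) k) *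
            (Qs s : MvPowerSeries (Fin n) k) := by
        rw [← MvPolynomial.coeToMvPowerSeries.ringHom_apply, map_sum]
        refine Finset.sum_congr rfl fun s hs => ?_
        rw [map_mul, MvPolynomial.coeToMvPowerSeries.ringHom_apply,
          MvPolynomial.coeToMvPowerSeries.ringHom_apply]
      rw [h1, h2, hgsum, map_sum]
      refine Finset.sum_congr rfl fun s hs => ?_
      rw [map_mul, redPoly_spec π φ hker (c s), (hgsQ s hs).2.1]
    rw [hPsum]
    refine Ideal.sum_mem _ fun s hs => ?_
    rcases (hgsQ s hs).2.2 with h0 | hmem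
    · rw [h0, mul_zero]
      exact Ideal.zero_mem _
    · exact Ideal.mul_mem_left _ _ (Ideal.subset_span hmem)
  · intro hP
    refine Submodule.span_induction
      (p := fun Q _ => Q ∈ BarIdeal π φ I (N + 1)) ?_ ?_ ?_ ?_ hP
    · rintro Q ⟨q, ⟨hqQ, M', hM'le, hval'⟩, M, g, hqg, ⟨i0, hi0⟩, hQg⟩
      have hvalM : ValEq π (q : MvPowerSeries (Fin n) O) M := by
        constructor
        · intro i
          rw [hqg, map_smul, smul_eq_mul]
          exact Dvd.intro _ rfl
        · intro hall
          obtain ⟨u, hu⟩ := hall i0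
          rw [hqg, map_smul, smul_eq_mul, pow_succ, mul_assoc] at hu
          exact hi0 ⟨u, mul_left_cancel₀ (pow_ne_zero M hπ0) hu⟩
      have hM : M = M' := valEq_unique hvalM hval'
      refine ⟨monTA π (N + 1 - M, 0) * q, Ideal.mul_mem_left _ _ (hQI q hqQ), g, ?_, hQg⟩
      have hMle : M ≤ N + 1 := hM ▸ hM'le
      rw [monTA_mul_coe, hqg, smul_smul, ← pow_add, Nat.sub_add_cancel hMle]
    · exact ⟨0, Ideal.zero_mem I, 0, by simp, fun i => by simp⟩
    · rintro x y hx hy ⟨f1, hf1, g1, hg1, hP1⟩ ⟨f2, hf2, g2, hg2, hP2⟩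
      refine ⟨f1 + f2, Ideal.add_mem I hf1 hf2, g1 + g2, ?_, fun i => ?_⟩
      · rw [show ((f1 + f2 : TateAlgebra n O π) : MvPowerSeries (Fin n) O) =
          (f1 : MvPowerSeries (Fin n) O) + (f2 : MvPowerSeries (Fin n) O) from rfl,
          hg1, hg2, smul_add]
      · rw [MvPolynomial.coeff_add, map_add, map_add, hP1 i, hP2 i]
    · rintro a x hx ⟨f, hf, g, hg, hPx⟩
      refine ⟨liftTate π φ hsurj a * f, Ideal.mul_mem_left _ _ hf,
        ((liftTate π φ hsurj a : TateAlgebra n O π) : MvPowerSeries (Fin n) O) * g, ?_, ?_⟩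
      · rw [show ((liftTate π φ hsurj a * f : TateAlgebra n O π) :
          MvPowerSeries (Fin n) O) =
          ((liftTate π φ hsurj a : TateAlgebra n O π) : MvPowerSeries (Fin n) O) *
            (f : MvPowerSeries (Fin n) O) from rfl, hg, mul_smul_comm]
      · rw [← map_eq_coe_iff φ]
        rw [map_mul, liftTate_spec, (map_eq_coe_iff φ g x).mpr hPx]
        rw [smul_eq_mul, ← MvPolynomial.coe_mul]
end

section
/- Let f ∈ I ⊆ K{X}° with N = val(f), and suppose g ∈ K{X}° satisfies val(g) ≤ N and LM(ρ(g)) divides LM(ρ(f)) in k[X], say LM(ρ(f)) = X^i · LM(ρ(g)). Then LM(f) = π^{N - val(g)} · X^i · LM(g), and in particular LM(g) divides LM(f) in the monoid of Tate monomials. -/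
open MvPowerSeries

open TateStmt MvPowerSeries

variable {n : ℕ} {O k : Type*} [CommRing O] [IsDomain O] [IsDiscreteValuationRing O] [Field k]

lemma termLE_antisymm {mo : MonomialOrder (Fin n)} {a b : TMon n}
    (h1 : termLE mo a b) (h2 : termLE mo b a) : a = b := by
  rcases h1 with h1 | h1
  · exact h1
  rcases h2 with h2 | h2
  · exact h2.symm
  exfalso
  rcases h1 with h1 | ⟨h1e, h1l⟩ <;> rcases h2 with h2 | ⟨h2e, h2l⟩
  · omega
  · omega
  · omega
  · exact absurd h2l (not_lt_of_gt h1l)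

lemma lm_unique {π : O} {mo : MonomialOrder (Fin n)} {h : MvPowerSeries (Fin n) O}
    {m1 m2 : TMon n} (H1 : IsLM π mo h m1) (H2 : IsLM π mo h m2) : m1 = m2 :=
  termLE_antisymm (H2.2 m1 H1.1) (H1.2 m2 H2.1)

lemma lm_of_rho (π : O) (hπ : Prime π) (mo : MonomialOrder (Fin n)) (φ : O →+* k)
    (hker : RingHom.ker φ = Ideal.span {π})
    (h : MvPowerSeries (Fin n) O) (N : ℕ) (hv : ValEq π h N)
    (P : MvPolynomial (Fin n) k) (hP : IsRho π φ h P)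
    (d : Fin n →₀ ℕ) (hd : IsPolyLM mo P d) :
    IsLM π mo h (N, d) := by
  obtain ⟨N', g', hfg, ⟨i0, hi0⟩, hcoeff⟩ := hP
  have hphi : ∀ x : O, φ x = 0 ↔ π ∣ x := by
    intro x
    rw [← RingHom.mem_ker, hker, Ideal.mem_span_singleton]
  have hc : ∀ j, MvPowerSeries.coeff j h = π ^ N' * MvPowerSeries.coeff j g' := by
    intro j
    rw [hfg, map_smul, smul_eq_mul]
  have hcancel : ∀ (m : ℕ) (c : O), π ^ (m + 1) ∣ π ^ m * c ↔ π ∣ c := by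
    intro m c
    rw [pow_succ, mul_dvd_mul_iff_left (pow_ne_zero m hπ.ne_zero)]
  have hNN' : N' = N := by
    by_contra hne
    rcases lt_or_gt_of_ne hne with hlt | hgt
    · -- N' < N : then π ∣ coeff i0 g', contradiction
      have : π ^ N ∣ π ^ N' * MvPowerSeries.coeff i0 g' := hc i0 ▸ hv.1 i0
      have : π ^ (N' + 1) ∣ π ^ N' * MvPowerSeries.coeff i0 g' :=
        dvd_trans (pow_dvd_pow π hlt) this
      exact hi0 ((hcancel N' _).mp this)
    · -- N < N' : all coeffs divisible by π^(N+1)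
      apply hv.2
      intro j
      rw [hc j]
      exact dvd_mul_of_dvd_left (pow_dvd_pow π hgt) _
  rw [hNN'] at hc
  -- key: relating terms to coefficients of g'
  have hPne : ∀ j, MvPolynomial.coeff j P ≠ 0 ↔ ¬ π ∣ MvPowerSeries.coeff j g' := by
    intro j
    rw [hcoeff j]
    exact not_congr (hphi _)
  constructor
  · constructor
    · rw [hc d]; exact dvd_mul_right _ _
    · rw [hc d, hcancel]
      exact (hPne d).mp hd.1
  · rintro ⟨a, j⟩ ⟨hdvd, hndvd⟩
    have hNa : N ≤ a := by
      by_contra hlt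
      push_neg at hlt
      exact hndvd (dvd_trans (pow_dvd_pow π hlt) (hv.1 j))
    rcases eq_or_lt_of_le hNa with heq | hlt
    · subst heq
      have hj : ¬ π ∣ MvPowerSeries.coeff j g' := by
        rw [hc j, hcancel] at hndvd
        exact hndvd
      have hle : mo.toSyn j ≤ mo.toSyn d := hd.2 j ((hPne j).mpr hj)
      rcases eq_or_lt_of_le hle with heq2 | hlt2
      · left
        have : j = d := mo.toSyn.injective heq2
        rw [this]
      · right; right; exact ⟨rfl, hlt2⟩
    · right; left; exact hlt

/-- let `f ∈ I` with `N = val f`, and `g` with `val g = M ≤ N` such that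
`LM(ρ(g))` divides `LM(ρ(f))`, say `LM(ρ(f)) = X^i · LM(ρ(g))`. Then
`LM(f) = π^{N - val g} · X^i · LM(g)`; in particular `LM(g)` divides `LM(f)` in the monoid
of Tate monomials. -/
theorem statement_18 (π : O) (hπ : Irreducible π) (mo : MonomialOrder (Fin n))
    (φ : O →+* k) (hsurj : Function.Surjective φ)
    (hker : RingHom.ker φ = Ideal.span {π})
    (I : Ideal (TateAlgebra n O π)) (f g : TateAlgebra n O π) (hfI : f ∈ I)
    (N M : ℕ) (hvf : ValEq π (f : MvPowerSeries (Fin n) O) N)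
    (hvg : ValEq π (g : MvPowerSeries (Fin n) O) M) (hMN : M ≤ N)
    (P Q : MvPolynomial (Fin n) k)
    (hP : IsRho π φ (f : MvPowerSeries (Fin n) O) P)
    (hQ : IsRho π φ (g : MvPowerSeries (Fin n) O) Q)
    (dP dQ : Fin n →₀ ℕ) (i : Fin n →₀ ℕ)
    (hdP : IsPolyLM mo P dP) (hdQ : IsPolyLM mo Q dQ) (hdiv : dP = i + dQ) :
    ∀ mg, IsLM π mo (g : MvPowerSeries (Fin n) O) mg →
      IsLM π mo (f : MvPowerSeries (Fin n) O) (monMul (N - M, i) mg) ∧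
      monDvd mg (monMul (N - M, i) mg) := by
  intro mg hmg
  have hprime : Prime π := hπ.prime
  have hg : IsLM π mo (g : MvPowerSeries (Fin n) O) (M, dQ) :=
    lm_of_rho π hprime mo φ hker _ M hvg Q hQ dQ hdQ
  have hf : IsLM π mo (f : MvPowerSeries (Fin n) O) (N, dP) :=
    lm_of_rho π hprime mo φ hker _ N hvf P hP dP hdP
  have hmgeq : mg = (M, dQ) := lm_unique hmg hg
  subst hmgeq
  have hmul : monMul (N - M, i) (M, dQ) = (N, dP) := by
    rw [hdiv]
    show ((N - M) + M, i + dQ) = (N, i + dQ)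
    rw [Nat.sub_add_cancel hMN]
  constructor
  · rw [hmul]; exact hf
  · rw [hmul, hdiv]
    exact ⟨hMN, le_add_self⟩
end
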